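/- For all r, s ∈ ℕ with r, s ≥ 1, every n ∈ ℕ, and every x ∈ ℚ, the Cauchy–Changhee mixed-type polynomial of order (r,s) satisfies CC_n^{(r,s)}(x) = Σ_{m=0}^{n} C(n,m) · C_m^{(r)}(x) · Ch_{n−m}^{(s)}, where C_m^{(r)}(x) are the Cauchy polynomials of the first kind of order r and Ch_{n−m}^{(s)} = Ch_{n−m}^{(s)}(0) are the Changhee numbers of order s. -/

import Mathlib

/-- `log(1+t) = ∑_{n ≥ 1} (-1)^{n+1} t^n / n` as a formal power series over `ℚ`. -/
noncomputable def logOneAdd : PowerSeries ℚ :=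
  PowerSeries.mk fun n => if n = 0 then 0 else (-1 : ℚ) ^ (n + 1) / n

/-- `e^{xt} = ∑_{n ≥ 0} x^n t^n / n!` as a formal power series over `ℚ`. -/
noncomputable def expMul (x : ℚ) : PowerSeries ℚ :=
  PowerSeries.mk fun n => x ^ n / (n.factorial : ℚ)

/-- Formal composition `f(g(t))` of power series, intended for `g` with zero
constant term (then `coeff n (g^m) = 0` for `m > n`, so the sum below is the
full composition). -/
noncomputable def psComp (f g : PowerSeries ℚ) : PowerSeries ℚ :=
  PowerSeries.mk fun n =>
    ∑ m ∈ Finset.range (n + 1),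
      PowerSeries.coeff (R := ℚ) m f * PowerSeries.coeff (R := ℚ) n (g ^ m)

/-- `(1+t)^x := exp (x · log(1+t))` as a formal power series over `ℚ`. -/
noncomputable def onePlusPow (x : ℚ) : PowerSeries ℚ :=
  psComp (PowerSeries.exp ℚ) (x • logOneAdd)

/-- The falling factorial `(x)_n = x (x-1) ⋯ (x-n+1)`. -/
def fallFact (x : ℚ) (n : ℕ) : ℚ := ∏ i ∈ Finset.range n, (x - (i : ℚ))

lemma onePlusPow_zero : onePlusPow (0 : ℚ) = 1 := by
  unfold onePlusPow psComp
  ext n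
  rw [PowerSeries.coeff_mk]
  rw [zero_smul]
  rcases Nat.eq_zero_or_pos n with h | h
  · subst h
    simp [PowerSeries.exp, PowerSeries.coeff_one]
  · rw [Finset.sum_eq_zero, PowerSeries.coeff_one, if_neg h.ne']
    intro m hm
    rcases Nat.eq_zero_or_pos m with hm0 | hm0
    · subst hm0; simp [PowerSeries.coeff_one, h.ne']
    · rw [zero_pow hm0.ne']; simp

lemma logOneAdd_ne : (logOneAdd : PowerSeries ℚ) ≠ 0 := by
  intro h
  have := congrArg (PowerSeries.coeff (R := ℚ) 1) h
  simp [logOneAdd] at this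

lemma xAddTwo_ne : (PowerSeries.X + 2 : PowerSeries ℚ) ≠ 0 := by
  intro h
  have := congrArg (PowerSeries.constantCoeff (R := ℚ)) h
  rw [map_add, map_ofNat, PowerSeries.constantCoeff_X] at this; norm_num at this

theorem cauchy_changhee_mixed_eq_sum
    (r s : ℕ) (hr : 1 ≤ r) (hs : 1 ≤ s) (n : ℕ) (x : ℚ) (CC C Ch : ℕ → ℚ)
    (hCC : (PowerSeries.X : PowerSeries ℚ) ^ r * (2 : PowerSeries ℚ) ^ s * onePlusPow x =
      logOneAdd ^ r * (PowerSeries.X + 2) ^ s * (PowerSeries.mk fun k => CC k / (k.factorial : ℚ)))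
    (hC : (PowerSeries.X : PowerSeries ℚ) ^ r * onePlusPow x =
      logOneAdd ^ r * (PowerSeries.mk fun k => C k / (k.factorial : ℚ)))
    (hCh : (2 : PowerSeries ℚ) ^ s * onePlusPow (0 : ℚ) =
      (PowerSeries.X + 2) ^ s * (PowerSeries.mk fun k => Ch k / (k.factorial : ℚ))) :
    CC n = ∑ m ∈ Finset.range (n + 1), (n.choose m : ℚ) * C m * Ch (n - m) := by
  rw [onePlusPow_zero, mul_one] at hCh
  have key : (PowerSeries.mk fun k => CC k / (k.factorial : ℚ)) =
      (PowerSeries.mk fun k => C k / (k.factorial : ℚ)) *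
      (PowerSeries.mk fun k => Ch k / (k.factorial : ℚ)) := by
    have hne : (logOneAdd ^ r * (PowerSeries.X + 2) ^ s : PowerSeries ℚ) ≠ 0 :=
      mul_ne_zero (pow_ne_zero _ logOneAdd_ne) (pow_ne_zero _ xAddTwo_ne)
    apply mul_left_cancel₀ hne
    calc logOneAdd ^ r * (PowerSeries.X + 2) ^ s *
          (PowerSeries.mk fun k => CC k / (k.factorial : ℚ))
        = PowerSeries.X ^ r * (2 : PowerSeries ℚ) ^ s * onePlusPow x := hCC.symm
      _ = (PowerSeries.X ^ r * onePlusPow x) * (2 : PowerSeries ℚ) ^ s := by ring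
      _ = (logOneAdd ^ r * (PowerSeries.mk fun k => C k / (k.factorial : ℚ))) *
          ((PowerSeries.X + 2) ^ s * (PowerSeries.mk fun k => Ch k / (k.factorial : ℚ))) := by
          rw [hC, hCh]
      _ = _ := by ring
  have h := congrArg (PowerSeries.coeff (R := ℚ) n) key
  rw [PowerSeries.coeff_mk, PowerSeries.coeff_mul,
    Finset.Nat.sum_antidiagonal_eq_sum_range_succ_mk] at h
  simp only [PowerSeries.coeff_mk] at h
  have hn : (n.factorial : ℚ) ≠ 0 := Nat.cast_ne_zero.2 n.factorial_ne_zero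
  have := congrArg (fun y => (n.factorial : ℚ) * y) h
  simp only [Finset.mul_sum] at this
  rw [mul_div_cancel₀ _ hn] at this
  rw [this]
  apply Finset.sum_congr rfl
  intro m hm
  have hmn : m ≤ n := Nat.lt_succ_iff.mp (Finset.mem_range.mp hm)
  have hfac : ((n.choose m : ℚ)) * m.factorial * (n - m).factorial = n.factorial := by
    rw [← Nat.cast_mul, ← Nat.cast_mul, ← Nat.choose_mul_factorial_mul_factorial hmn]
  have hm0 : (m.factorial : ℚ) ≠ 0 := Nat.cast_ne_zero.2 m.factorial_ne_zero
  have hm1 : ((n - m).factorial : ℚ) ≠ 0 := Nat.cast_ne_zero.2 (n - m).factorial_ne_zero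
  field_simp
  rw [← hfac]
  ring
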